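/- Suppose ad > bc, Δ_Δ ≥ 0, and at least one of the two numbers (2 − a)x_Δ^+ − b and (2 − a)x_Δ^− − b is positive. Then there exists N such that for every n > N the polynomial W_n has at least one real root. -/

import Mathlib

open Polynomial

private lemma seq_ext' (p q : ℝ) (f g : ℕ → ℝ) (h0 : f 0 = g 0) (h1 : f 1 = g 1)
    (hf : ∀ n, f (n + 2) = p * f (n + 1) + q * f n)
    (hg : ∀ n, g (n + 2) = p * g (n + 1) + q * g n) : ∀ n, f n = g n := by
  have key : ∀ n, f n = g n ∧ f (n + 1) = g (n + 1) := by
    intro n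
    induction n with
    | zero => exact ⟨h0, h1⟩
    | succ k ih => exact ⟨ih.2, by rw [hf, hg, ih.1, ih.2]⟩
  exact fun n => (key n).1

private lemma ivt_root' (p : Polynomial ℝ) (u v : ℝ) (huv : u ≤ v)
    (h1 : p.eval u < 0) (h2 : 0 < p.eval v) : ∃ x, p.IsRoot x := by
  obtain ⟨y, _, hy⟩ := intermediate_value_Icc huv p.continuous.continuousOn
    (Set.mem_Icc.mpr ⟨h1.le, h2.le⟩)
  exact ⟨y, hy⟩

/-- If `a * d > b * c`, `ΔΔ ≥ 0`, and at least one of `(2 - a) * xΔ⁺ - b`,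
`(2 - a) * xΔ⁻ - b` is positive, then there exists `N` such that `W n` has at
least one real root for all `n > N`. -/
theorem stmt_4 (a b c d : ℝ) (ha : 0 < a) (hb : 0 < b) (hc : 0 < c) (hd : 0 < d)
    (W : ℕ → Polynomial ℝ)
    (hW0 : W 0 = 1) (hW1 : W 1 = X)
    (hW : ∀ n : ℕ, W (n + 2) = (C a * X + C b) * W (n + 1) + (C c * X + C d) * W n)
    (DD : ℝ) (hDD : DD = -a ^ 2 * d + a * b * c + c ^ 2)
    (xdm xdp : ℝ)
    (hxdm : xdm = (-(a * b) - 2 * c - 2 * Real.sqrt DD) / a ^ 2)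
    (hxdp : xdp = (-(a * b) - 2 * c + 2 * Real.sqrt DD) / a ^ 2)
    (had : b * c < a * d) (hDD0 : 0 ≤ DD)
    (hpos : 0 < (2 - a) * xdp - b ∨ 0 < (2 - a) * xdm - b) :
    ∃ N : ℕ, ∀ n : ℕ, N < n → ∃ x : ℝ, (W n).IsRoot x := by
  have hevalrec : ∀ (z : ℝ) (n : ℕ),
      eval z (W (n + 2)) = (a * z + b) * eval z (W (n + 1)) + (c * z + d) * eval z (W n) := by
    intro z n
    rw [hW n]
    simp [eval_add, eval_mul]
  -- values at 0 are positive for n ≥ 2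
  have hW0pos : ∀ n, 0 < eval 0 (W (n + 2)) := by
    have key : ∀ n, 0 ≤ eval 0 (W n) ∧ 0 ≤ eval 0 (W (n + 1)) ∧ 0 < eval 0 (W (n + 2)) := by
      intro n
      induction n with
      | zero =>
        refine ⟨by simp [hW0], by simp [hW1], ?_⟩
        rw [hevalrec 0 0]
        simp [hW0, hW1]
        positivity
      | succ k ih =>
        refine ⟨ih.2.1, ih.2.2.le, ?_⟩
        rw [hevalrec 0 (k + 1)]
        nlinarith [ih.2.1, ih.2.2]
    exact fun n => (key n).2.2
  -- the point z0 = -d/c : values negative for odd n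
  have hc0 : (c : ℝ) ≠ 0 := ne_of_gt hc
  set z0 : ℝ := -d / c with hz0def
  have hz0neg : z0 < 0 := div_neg_of_neg_of_pos (by linarith) hc
  have hcz0 : c * z0 + d = 0 := by rw [hz0def]; field_simp; ring
  set e : ℝ := a * z0 + b with hedef
  have heneg : e < 0 := by
    have : e = (b * c - a * d) / c := by rw [hedef, hz0def]; field_simp; ring
    rw [this]
    exact div_neg_of_neg_of_pos (by linarith) hc
  have hWz0 : ∀ n, eval z0 (W (n + 1)) = e ^ n * z0 := by
    have key : ∀ n, eval z0 (W (n + 1)) = e ^ n * z0 ∧ eval z0 (W (n + 2)) = e ^ (n + 1) * z0 := by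
      intro n
      induction n with
      | zero =>
        constructor
        · simp [hW1]
        · rw [hevalrec z0 0, hcz0, hW0, hW1]
          simp [hedef]
      | succ k ih =>
        refine ⟨ih.2, ?_⟩
        rw [hevalrec z0 (k + 1), hcz0, ih.1, ih.2, ← hedef]
        ring
    exact fun n => (key n).1
  -- get the special point x with Δ(x) = 0 and a x + b < 2 x
  obtain ⟨x, hΔx, hcond⟩ : ∃ x : ℝ,
      a ^ 2 * x ^ 2 + (2 * a * b + 4 * c) * x + (b ^ 2 + 4 * d) = 0 ∧ a * x + b < 2 * x := by
    have ha0 : (a : ℝ) ≠ 0 := ne_of_gt ha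
    have ha2 : (a : ℝ) ^ 2 ≠ 0 := pow_ne_zero 2 ha0
    have hs : Real.sqrt DD ^ 2 = DD := Real.sq_sqrt hDD0
    set s : ℝ := Real.sqrt DD with hsdef
    rcases hpos with h | h
    · refine ⟨xdp, ?_, by nlinarith⟩
      rw [hxdp]
      field_simp
      linear_combination 4 * hs + 4 * hDD
    · refine ⟨xdm, ?_, by nlinarith⟩
      rw [hxdm]
      field_simp
      linear_combination 4 * hs + 4 * hDD
  have hsq : (a * x + b) ^ 2 = -(4 * (c * x + d)) := by linear_combination hΔx
  have hcxd : c * x + d ≤ 0 := by nlinarith [sq_nonneg (a * x + b)]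
  have hxneg : x < 0 := by nlinarith
  set t : ℝ := (a * x + b) / 2 with htdef
  have htx : t < x := by rw [htdef]; linarith
  have htneg : t < 0 := htx.trans hxneg
  have ht0 : t ≠ 0 := ne_of_lt htneg
  set A : ℝ := (x - t) / t with hAdef
  have hA : A < 0 := div_neg_of_pos_of_neg (by linarith) htneg
  have h2t : a * x + b = 2 * t := by rw [htdef]; ring
  have hq' : c * x + d = -t ^ 2 := by rw [htdef]; linear_combination hsq / 4
  have hWx : ∀ n : ℕ, eval x (W n) = (1 + A * n) * t ^ n := by
    have hext := seq_ext' (a * x + b) (c * x + d) (fun n => eval x (W n))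
      (fun n => (1 + A * n) * t ^ n)
      (by simp [hW0]) ?_ (fun n => hevalrec x n) ?_
    · exact hext
    · simp only [hW1, eval_X, Nat.cast_one]
      rw [hAdef]
      field_simp
      ring
    · intro n
      rw [h2t, hq']
      push_cast
      ring
  -- choose N
  obtain ⟨M, hM⟩ := exists_nat_gt (1 / (-A))
  refine ⟨M + 2, fun n hn => ?_⟩
  have hn2 : 2 ≤ n := by omega
  have h1An : 1 + A * (n : ℝ) < 0 := by
    have hMn : (1 / (-A) : ℝ) < (n : ℝ) := lt_of_lt_of_le hM (by exact_mod_cast by omega)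
    rw [div_lt_iff₀ (neg_pos.mpr hA)] at hMn
    nlinarith
  rcases Nat.even_or_odd n with hev | hod
  · -- even case: sign change between x and 0
    have hvx : eval x (W n) < 0 := by
      rw [hWx n]
      exact mul_neg_of_neg_of_pos h1An (hev.pow_pos ht0)
    obtain ⟨m, rfl⟩ : ∃ m, n = m + 2 := ⟨n - 2, by omega⟩
    exact ivt_root' (W (m + 2)) x 0 hxneg.le hvx (hW0pos m)
  · -- odd case: sign change between z0 and 0
    obtain ⟨m, rfl⟩ : ∃ m, n = m + 1 := ⟨n - 1, by omega⟩
    have hmev : Even m := by simpa using Nat.Odd.sub_odd hod odd_one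
    have hvz : eval z0 (W (m + 1)) < 0 := by
      rw [hWz0 m]
      exact mul_neg_of_pos_of_neg (hmev.pow_pos (ne_of_lt heneg)) hz0neg
    obtain ⟨k, rfl⟩ : ∃ k, m = k + 1 := ⟨m - 1, by omega⟩
    exact ivt_root' (W (k + 2)) z0 0 hz0neg.le hvz (hW0pos k)
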